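/- Let ι be a finite index type with at least two elements and Y : ι → Multiset ℝ a family of nonempty finite multisets of reals. Then the MAE-split optimum satisfies λ* = min over a, b ∈ ℝ of Σ_{i ∈ ι} min( Σ_{x ∈ Y i} |x − a| , Σ_{x ∈ Y i} |x − b| ), i.e. this two-variable infimum is attained and equals λ*. -/

import Mathlib

open Filter

private lemma cont_g (m : Multiset ℝ) :
    Continuous fun a : ℝ => (m.map fun x => |x - a|).sum := by
  induction m using Multiset.induction_on with
  | empty => simpa using continuous_const
  | cons x s ih =>
    simp only [Multiset.map_cons, Multiset.sum_cons]
    exact ((continuous_const.sub continuous_id).abs).add ih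

private lemma g_nonneg (m : Multiset ℝ) (a : ℝ) :
    0 ≤ (m.map fun x => |x - a|).sum := by
  apply Multiset.sum_nonneg
  intro y hy
  obtain ⟨x, -, rfl⟩ := Multiset.mem_map.mp hy
  exact abs_nonneg _

private lemma bdd_g (m : Multiset ℝ) :
    BddBelow (Set.range fun a : ℝ => (m.map fun x => |x - a|).sum) :=
  ⟨0, by rintro v ⟨a, rfl⟩; exact g_nonneg m a⟩

/-- The mean absolute error of a finite multiset of reals:
`MAE m = min_{a ∈ ℝ} Σ_{x ∈ m} |x − a|` (as an infimum; it is attained for `m ≠ 0`). -/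
noncomputable def MAE (m : Multiset ℝ) : ℝ :=
  sInf (Set.range fun a : ℝ => (m.map fun x => |x - a|).sum)

private lemma MAE_le (m : Multiset ℝ) (a : ℝ) :
    MAE m ≤ (m.map fun x => |x - a|).sum :=
  csInf_le (bdd_g m) ⟨a, rfl⟩

private lemma MAE_exists_min (m : Multiset ℝ) (hm : m ≠ 0) :
    ∃ a : ℝ, MAE m = (m.map fun x => |x - a|).sum := by
  obtain ⟨x₀, hx₀⟩ := Multiset.exists_mem_of_ne_zero hm
  obtain ⟨s, rfl⟩ := Multiset.exists_cons_of_mem hx₀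
  have hlb : ∀ a : ℝ, |x₀ - a| ≤ ((x₀ ::ₘ s).map fun x => |x - a|).sum := by
    intro a
    simp only [Multiset.map_cons, Multiset.sum_cons]
    linarith [g_nonneg s a]
  have habs_top : Tendsto (fun a : ℝ => |x₀ - a|) atTop atTop := by
    apply tendsto_atTop_mono (fun a : ℝ => le_abs_self (a - x₀) |>.trans_eq (abs_sub_comm _ _))
    exact tendsto_atTop_add_const_right atTop (-x₀) tendsto_id
  have habs_bot : Tendsto (fun a : ℝ => |x₀ - a|) atBot atTop := by
    apply tendsto_atTop_mono (fun a : ℝ => le_abs_self (x₀ - a))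
    exact tendsto_atTop_add_const_left atBot x₀ tendsto_neg_atBot_atTop
  have htend : Tendsto (fun a : ℝ => ((x₀ ::ₘ s).map fun x => |x - a|).sum)
      (cocompact ℝ) atTop := by
    rw [cocompact_eq_atBot_atTop, tendsto_sup]
    exact ⟨tendsto_atTop_mono hlb habs_bot, tendsto_atTop_mono hlb habs_top⟩
  obtain ⟨a, ha⟩ := (cont_g _).exists_forall_le htend
  refine ⟨a, le_antisymm (MAE_le _ a) (le_csInf ⟨_, ⟨a, rfl⟩⟩ ?_)⟩
  rintro v ⟨a', rfl⟩; exact ha a'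

private lemma map_sum_eq {ι : Type*} [DecidableEq ι] (Y : ι → Multiset ℝ) (S : Finset ι)
    (a : ℝ) :
    ((∑ i ∈ S, Y i).map fun x => |x - a|).sum
      = ∑ i ∈ S, ((Y i).map fun x => |x - a|).sum := by
  induction S using Finset.induction_on with
  | empty => simp
  | insert _ _ h ih => simp [Finset.sum_insert h, ih]

private lemma sum_Y_ne_zero {ι : Type*} [DecidableEq ι] (Y : ι → Multiset ℝ)
    (hY : ∀ i, Y i ≠ 0) (S : Finset ι) (hS : S.Nonempty) : (∑ i ∈ S, Y i) ≠ 0 := by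
  obtain ⟨i, hi⟩ := hS
  intro h
  exact hY i (by simpa using (Finset.sum_eq_zero_iff.mp h i hi))

/-- The cost `λ(S) = MAE(Σ_{i ∈ S} Y i) + MAE(Σ_{i ∉ S} Y i)` of a split `S`. -/
noncomputable def splitCost {ι : Type*} [Fintype ι] [DecidableEq ι]
    (Y : ι → Multiset ℝ) (S : Finset ι) : ℝ :=
  MAE (∑ i ∈ S, Y i) + MAE (∑ i ∈ Sᶜ, Y i)

/-- The MAE-split optimum `λ*`: the minimum of `λ(S)` over all subsets `S` with both
`S` and its complement nonempty. -/
noncomputable def lamStar {ι : Type*} [Fintype ι] [DecidableEq ι]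
    (Y : ι → Multiset ℝ) : ℝ :=
  sInf {v : ℝ | ∃ S : Finset ι, S.Nonempty ∧ Sᶜ.Nonempty ∧ v = splitCost Y S}

theorem mae_split_eq_two_median {ι : Type*} [Fintype ι] [DecidableEq ι]
    (h2 : 2 ≤ Fintype.card ι) (Y : ι → Multiset ℝ) (hY : ∀ i, Y i ≠ 0) :
    ∃ a b : ℝ,
      (∀ a' b' : ℝ,
        (∑ i, min ((Y i).map fun x => |x - a|).sum ((Y i).map fun x => |x - b|).sum)
          ≤ ∑ i, min ((Y i).map fun x => |x - a'|).sum ((Y i).map fun x => |x - b'|).sum) ∧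
      (∑ i, min ((Y i).map fun x => |x - a|).sum ((Y i).map fun x => |x - b|).sum)
        = lamStar Y := by
  classical
  set f : ι → ℝ → ℝ := fun i a => ((Y i).map fun x => |x - a|).sum with hf
  set V : Set ℝ :=
    {v : ℝ | ∃ S : Finset ι, S.Nonempty ∧ Sᶜ.Nonempty ∧ v = splitCost Y S} with hV
  have hVfin : V.Finite := by
    apply Set.Finite.subset (Set.finite_range (splitCost Y))
    rintro v ⟨S, -, -, rfl⟩; exact ⟨S, rfl⟩
  obtain ⟨i₀, i₁, hne⟩ := Fintype.exists_pair_of_one_lt_card (α := ι) (by omega)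
  have hVne : V.Nonempty := by
    refine ⟨splitCost Y {i₀}, {i₀}, ⟨i₀, Finset.mem_singleton_self i₀⟩, ⟨i₁, ?_⟩, rfl⟩
    simp [Finset.mem_compl, hne.symm]
  have hbddV : BddBelow V := hVfin.bddBelow
  have hlamV : lamStar Y = sInf V := rfl
  have lam_le : ∀ T : Finset ι, T.Nonempty → Tᶜ.Nonempty → lamStar Y ≤ splitCost Y T := by
    intro T h1 h2'
    rw [hlamV]; exact csInf_le hbddV ⟨T, h1, h2', rfl⟩
  -- splitCost lower-bounds any two-point assignment through any split
  have split_le : ∀ (T : Finset ι) (a' b' : ℝ),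
      splitCost Y T ≤ ∑ i ∈ T, f i a' + ∑ i ∈ Tᶜ, f i b' := by
    intro T a' b'
    unfold splitCost
    have h1 : MAE (∑ i ∈ T, Y i) ≤ ∑ i ∈ T, f i a' := by
      simpa [map_sum_eq] using MAE_le (∑ i ∈ T, Y i) a'
    have h2' : MAE (∑ i ∈ Tᶜ, Y i) ≤ ∑ i ∈ Tᶜ, f i b' := by
      simpa [map_sum_eq] using MAE_le (∑ i ∈ Tᶜ, Y i) b'
    exact add_le_add h1 h2'
  -- Claim A : lamStar ≤ G a' b' for all a', b'
  have claimA : ∀ a' b' : ℝ, lamStar Y ≤ ∑ i, min (f i a') (f i b') := by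
    intro a' b'
    set T : Finset ι := Finset.univ.filter (fun i => f i a' ≤ f i b') with hT
    have hsplit : ∑ i, min (f i a') (f i b') = ∑ i ∈ T, f i a' + ∑ i ∈ Tᶜ, f i b' := by
      rw [← Finset.sum_add_sum_compl T (fun i => min (f i a') (f i b'))]
      congr 1
      · refine Finset.sum_congr rfl fun i hi => min_eq_left ?_
        exact (Finset.mem_filter.mp hi).2
      · refine Finset.sum_congr rfl fun i hi => min_eq_right ?_
        have := Finset.mem_compl.mp hi
        have : ¬ f i a' ≤ f i b' := fun h => this (Finset.mem_filter.mpr ⟨Finset.mem_univ i, h⟩)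
        linarith [lt_of_not_ge this]
    by_cases hT1 : T.Nonempty
    · by_cases hT2 : Tᶜ.Nonempty
      · rw [hsplit]; exact (lam_le T hT1 hT2).trans (split_le T a' b')
      · -- T = univ : every min is f i a'
        have hTu : T = Finset.univ := by
          rwa [Finset.not_nonempty_iff_eq_empty, Finset.compl_eq_empty_iff] at hT2
        have hmin : ∀ i : ι, min (f i a') (f i b') = f i a' := by
          intro i
          have hiT : i ∈ T := by rw [hTu]; exact Finset.mem_univ i
          exact min_eq_left (Finset.mem_filter.mp hiT).2
        calc lamStar Y ≤ splitCost Y {i₀} := by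
              refine lam_le {i₀} ⟨i₀, Finset.mem_singleton_self i₀⟩ ⟨i₁, ?_⟩
              simp [Finset.mem_compl, hne.symm]
          _ ≤ ∑ i ∈ ({i₀} : Finset ι), f i a' + ∑ i ∈ ({i₀} : Finset ι)ᶜ, f i a' :=
              split_le {i₀} a' a'
          _ = ∑ i, f i a' := Finset.sum_add_sum_compl _ _
          _ = ∑ i, min (f i a') (f i b') := by
              exact (Finset.sum_congr rfl fun i _ => (hmin i).symm)
    · -- T = ∅ : every min is f i b'
      rw [Finset.not_nonempty_iff_eq_empty] at hT1
      have hmin : ∀ i : ι, min (f i a') (f i b') = f i b' := by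
        intro i
        have : i ∉ T := hT1 ▸ Finset.notMem_empty i
        have : ¬ f i a' ≤ f i b' := fun h => this (Finset.mem_filter.mpr ⟨Finset.mem_univ i, h⟩)
        exact min_eq_right (le_of_lt (lt_of_not_ge this))
      calc lamStar Y ≤ splitCost Y {i₀} := by
            refine lam_le {i₀} ⟨i₀, Finset.mem_singleton_self i₀⟩ ⟨i₁, ?_⟩
            simp [Finset.mem_compl, hne.symm]
        _ ≤ ∑ i ∈ ({i₀} : Finset ι), f i b' + ∑ i ∈ ({i₀} : Finset ι)ᶜ, f i b' :=
            split_le {i₀} b' b'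
        _ = ∑ i, f i b' := Finset.sum_add_sum_compl _ _
        _ = ∑ i, min (f i a') (f i b') := Finset.sum_congr rfl fun i _ => (hmin i).symm
  -- optimal split attaining lamStar
  have hmem : lamStar Y ∈ V := by rw [hlamV]; exact hVne.csInf_mem hVfin
  obtain ⟨S, hS, hSc, hEq⟩ := hmem
  obtain ⟨a, ha⟩ := MAE_exists_min (∑ i ∈ S, Y i) (sum_Y_ne_zero Y hY S hS)
  obtain ⟨b, hb⟩ := MAE_exists_min (∑ i ∈ Sᶜ, Y i) (sum_Y_ne_zero Y hY Sᶜ hSc)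
  have claimB : ∑ i, min (f i a) (f i b) ≤ lamStar Y := by
    rw [hEq]
    unfold splitCost
    rw [ha, hb, map_sum_eq, map_sum_eq]
    rw [← Finset.sum_add_sum_compl S (fun i => min (f i a) (f i b))]
    exact add_le_add
      (Finset.sum_le_sum fun i _ => min_le_left _ _)
      (Finset.sum_le_sum fun i _ => min_le_right _ _)
  refine ⟨a, b, fun a' b' => ?_, le_antisymm claimB (claimA a b)⟩
  exact (le_antisymm claimB (claimA a b)).le.trans (claimA a' b')
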